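/- For all m, n ≥ 1 and any pattern τ, s_{m+n}(τ,0) ≥ s_m(τ,0) · s_n(τ,0), i.e., the sequence counting τ-avoiding permutations is supermultiplicative. -/

import Mathlib

/-- `π` avoids the pattern `τ`: there is no strictly increasing choice of positions whose
subsequence is order-isomorphic to `τ`. -/
def Avoids {k n : ℕ} (τ : Equiv.Perm (Fin k)) (π : Equiv.Perm (Fin n)) : Prop :=
  ¬ ∃ f : Fin k → Fin n, StrictMono f ∧ ∀ x y : Fin k, π (f x) < π (f y) ↔ τ x < τ y

open scoped Classical in
/-- `s n τ` = number of permutations of {1,…,n} avoiding the pattern τ. -/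
noncomputable def avoiderCount (n : ℕ) {k : ℕ} (τ : Equiv.Perm (Fin k)) : ℕ :=
  (Finset.univ.filter (fun π : Equiv.Perm (Fin n) => Avoids τ π)).card

open Finset Equiv

/-- direct sum of two permutations -/
def psum {m n : ℕ} (σ : Equiv.Perm (Fin m)) (ρ : Equiv.Perm (Fin n)) :
    Equiv.Perm (Fin (m + n)) :=
  finSumFinEquiv.permCongr (σ.sumCongr ρ)

lemma psum_apply_lt {m n : ℕ} (σ : Equiv.Perm (Fin m)) (ρ : Equiv.Perm (Fin n))
    (i : Fin (m + n)) (h : i.val < m) :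
    ((psum σ ρ) i).val = (σ ⟨i.val, h⟩).val := by
  have hi : finSumFinEquiv.symm i = Sum.inl ⟨i.val, h⟩ := by
    rw [Equiv.symm_apply_eq]
    ext; rfl
  simp [psum, Equiv.permCongr_apply, hi]

lemma psum_apply_ge {m n : ℕ} (σ : Equiv.Perm (Fin m)) (ρ : Equiv.Perm (Fin n))
    (i : Fin (m + n)) (h : m ≤ i.val) :
    ((psum σ ρ) i).val = m + (ρ ⟨i.val - m, by have := i.isLt; omega⟩).val := by
  have hi : finSumFinEquiv.symm i = Sum.inr ⟨i.val - m, by have := i.isLt; omega⟩ := by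
    rw [Equiv.symm_apply_eq]
    ext; simp; omega
  simp [psum, Equiv.permCongr_apply, hi]

lemma psum_injective2 {m n : ℕ} {σ σ' : Equiv.Perm (Fin m)} {ρ ρ' : Equiv.Perm (Fin n)}
    (h : psum σ ρ = psum σ' ρ') : σ = σ' ∧ ρ = ρ' := by
  have h2 : σ.sumCongr ρ = σ'.sumCongr ρ' := by
    have := finSumFinEquiv.permCongr.injective (by exact h)
    exact this
  constructor
  · ext i
    have h3 : σ i = σ' i := by
      have := congrArg (fun e : Equiv.Perm (Fin m ⊕ Fin n) => e (Sum.inl i)) h2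
      simpa using this
    rw [h3]
  · ext i
    have h3 : ρ i = ρ' i := by
      have := congrArg (fun e : Equiv.Perm (Fin m ⊕ Fin n) => e (Sum.inr i)) h2
      simpa using this
    rw [h3]

def SumDecomp {k : ℕ} (τ : Equiv.Perm (Fin k)) : Prop :=
  ∃ j, 0 < j ∧ j < k ∧ ∀ x : Fin k, x.val < j ↔ (τ x).val < j

def SkewDecomp {k : ℕ} (τ : Equiv.Perm (Fin k)) : Prop :=
  ∃ j, 0 < j ∧ j < k ∧ ∀ x : Fin k, x.val < j ↔ k - j ≤ (τ x).val

lemma not_sum_and_skew {k : ℕ} (τ : Equiv.Perm (Fin k)) :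
    ¬ (SumDecomp τ ∧ SkewDecomp τ) := by
  rintro ⟨⟨i, hi0, hik, hi⟩, ⟨j, hj0, hjk, hj⟩⟩
  have hk : 0 < k := by omega
  have h1 := (hi ⟨0, hk⟩).1 (by simpa using hi0)
  have h2 := (hj ⟨0, hk⟩).1 (by simpa using hj0)
  have h3 : ¬ ((τ ⟨k - 1, by omega⟩).val < i) := fun h => by
    have := (hi ⟨k - 1, by omega⟩).2 h; simp at this; omega
  have h4 : ¬ (k - j ≤ (τ ⟨k - 1, by omega⟩).val) := fun h => by
    have := (hj ⟨k - 1, by omega⟩).2 h; simp at this; omega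
  omega

lemma card_filter_val_lt {k j : ℕ} (hj : j ≤ k) :
    (Finset.univ.filter (fun y : Fin k => y.val < j)).card = j := by
  rcases Nat.lt_or_ge j k with h | h
  · have he : (Finset.univ.filter (fun y : Fin k => y.val < j)) = Finset.Iio ⟨j, h⟩ := by
      ext y; simp [Fin.lt_def]
    rw [he, Fin.card_Iio]
  · have hjk : j = k := le_antisymm hj h
    subst hjk
    have he : (Finset.univ.filter (fun y : Fin j => y.val < j)) = Finset.univ := by
      ext y; simp [y.isLt]
    rw [he]; simp

lemma card_filter_perm_lt {k : ℕ} (τ : Equiv.Perm (Fin k)) (x : Fin k) :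
    (Finset.univ.filter (fun y : Fin k => τ y < τ x)).card = (τ x).val := by
  have himg : (Finset.univ.filter (fun y : Fin k => τ y < τ x)).image τ
      = Finset.Iio (τ x) := by
    ext z
    simp only [Finset.mem_image, Finset.mem_filter, Finset.mem_univ, true_and,
      Finset.mem_Iio]
    constructor
    · rintro ⟨y, hy, rfl⟩; exact hy
    · intro hz; exact ⟨τ.symm z, by simpa using hz, by simp⟩
  calc (Finset.univ.filter (fun y : Fin k => τ y < τ x)).card
      = ((Finset.univ.filter (fun y : Fin k => τ y < τ x)).image τ).card :=
        (Finset.card_image_of_injective _ τ.injective).symm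
    _ = (Finset.Iio (τ x)).card := by rw [himg]
    _ = (τ x).val := by rw [Fin.card_Iio]

open scoped Classical in
lemma avoids_psum {k m n : ℕ} {τ : Equiv.Perm (Fin k)} (hτ : ¬ SumDecomp τ)
    {σ : Equiv.Perm (Fin m)} {ρ : Equiv.Perm (Fin n)}
    (hσ : Avoids τ σ) (hρ : Avoids τ ρ) : Avoids τ (psum σ ρ) := by
  rintro ⟨f, hf, hiso⟩
  set π := psum σ ρ with hπ
  set S := Finset.univ.filter (fun x : Fin k => (f x).val < m) with hS
  set j := S.card with hjdef
  have hjk : j ≤ k := by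
    calc j ≤ (Finset.univ : Finset (Fin k)).card := Finset.card_filter_le _ _
    _ = k := by simp
  -- positions: x < j ↔ f x < m
  have hj1 : ∀ x : Fin k, (f x).val < m ↔ x.val < j := by
    intro x
    constructor
    · intro hx
      have hsub : Finset.Iic x ⊆ S := by
        intro y hy
        simp only [Finset.mem_Iic] at hy
        simp only [hS, Finset.mem_filter, Finset.mem_univ, true_and]
        have : f y ≤ f x := hf.monotone hy
        omega
      have := Finset.card_le_card hsub
      rw [Fin.card_Iic] at this
      omega
    · intro hx
      by_contra hfx
      have hsub : S ⊆ Finset.Iio x := by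
        intro y hy
        simp only [hS, Finset.mem_filter, Finset.mem_univ, true_and] at hy
        simp only [Finset.mem_Iio]
        by_contra hyx
        have : f x ≤ f y := hf.monotone (le_of_not_gt hyx)
        omega
      have := Finset.card_le_card hsub
      rw [Fin.card_Iio] at this
      omega
  -- values: π (f x) < m ↔ f x < m
  have hv : ∀ x : Fin k, (π (f x)).val < m ↔ (f x).val < m := by
    intro x
    by_cases h : (f x).val < m
    · rw [psum_apply_lt σ ρ _ h]
      simp [h, Fin.isLt]
    · rw [psum_apply_ge σ ρ _ (le_of_not_gt h)]
      omega
  -- values pattern: τ x < j ↔ x < j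
  have hτj : ∀ x : Fin k, (τ x).val < j ↔ x.val < j := by
    intro x
    constructor
    · intro hτx
      by_contra hx
      -- x ≥ j, τ x < j : then {y : y < j} ⊆ {y : τ y < τ x}
      have hsub : Finset.univ.filter (fun y : Fin k => y.val < j)
          ⊆ Finset.univ.filter (fun y : Fin k => τ y < τ x) := by
        intro y hy
        simp only [Finset.mem_filter, Finset.mem_univ, true_and] at *
        have hfy : (f y).val < m := (hj1 y).2 hy
        have hfx : ¬ (f x).val < m := fun h => hx ((hj1 x).1 h)
        have : π (f y) < π (f x) := by
          rw [Fin.lt_def]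
          have h1 := (hv y).2 hfy
          have h2 : ¬ (π (f x)).val < m := fun h => hfx ((hv x).1 h)
          omega
        exact (hiso y x).1 this
      have := Finset.card_le_card hsub
      rw [card_filter_val_lt hjk, card_filter_perm_lt] at this
      omega
    · intro hx
      by_contra hτx
      -- x < j, τ x ≥ j : then {y : τ y < τ x} ⊂ {y : y < j}
      have hsub : Finset.univ.filter (fun y : Fin k => τ y < τ x)
          ⊆ Finset.univ.filter (fun y : Fin k => y.val < j) := by
        intro y hy
        simp only [Finset.mem_filter, Finset.mem_univ, true_and] at *
        have hπlt : π (f y) < π (f x) := (hiso y x).2 hy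
        have hfx : (f x).val < m := (hj1 x).2 hx
        have h2 := (hv x).2 hfx
        have : (π (f y)).val < m := by rw [Fin.lt_def] at hπlt; omega
        exact (hj1 y).1 ((hv y).1 this)
      have hss : Finset.univ.filter (fun y : Fin k => τ y < τ x)
          ⊂ Finset.univ.filter (fun y : Fin k => y.val < j) := by
        refine ⟨hsub, fun h => ?_⟩
        have hx' : x ∈ Finset.univ.filter (fun y : Fin k => y.val < j) := by
          simp [hx]
        have := h hx'
        simp at this
      have := Finset.card_lt_card hss
      rw [card_filter_val_lt hjk, card_filter_perm_lt] at this
      omega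
  -- case split on j
  by_cases hjk' : j = k
  · -- occurrence inside σ
    apply hσ
    have hall : ∀ x : Fin k, (f x).val < m := by
      intro x; exact (hj1 x).2 (by rw [hjk']; exact x.isLt)
    refine ⟨fun x => ⟨(f x).val, hall x⟩, ?_, ?_⟩
    · intro x y hxy
      have := hf hxy
      rw [Fin.lt_def] at this ⊢
      exact this
    · intro x y
      rw [← hiso x y]
      simp only [Fin.lt_def]
      rw [psum_apply_lt σ ρ (f x) (hall x), psum_apply_lt σ ρ (f y) (hall y)]
  by_cases hj0 : j = 0
  · -- occurrence inside ρ
    apply hρ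
    have hall : ∀ x : Fin k, m ≤ (f x).val := by
      intro x
      by_contra h
      have := (hj1 x).1 (lt_of_not_ge h)
      omega
    refine ⟨fun x => ⟨(f x).val - m, by have := (f x).isLt; have := hall x; omega⟩, ?_, ?_⟩
    · intro x y hxy
      have h1 := hf hxy
      have h2 := hall x
      simp only [Fin.lt_def] at h1 ⊢
      omega
    · intro x y
      rw [← hiso x y]
      simp only [Fin.lt_def]
      rw [psum_apply_ge σ ρ (f x) (hall x), psum_apply_ge σ ρ (f y) (hall y),
        Nat.add_lt_add_iff_left]
  · exact hτ ⟨j, by omega, by omega, fun x => ((hτj x).symm : _)⟩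

/-- complement of a permutation -/
def pcompl {n : ℕ} (π : Equiv.Perm (Fin n)) : Equiv.Perm (Fin n) :=
  π.trans Fin.revPerm

lemma pcompl_apply {n : ℕ} (π : Equiv.Perm (Fin n)) (x : Fin n) :
    pcompl π x = Fin.rev (π x) := rfl

lemma pcompl_pcompl {n : ℕ} (π : Equiv.Perm (Fin n)) : pcompl (pcompl π) = π := by
  ext x
  simp [pcompl_apply, Fin.rev_rev]

lemma avoids_pcompl {k n : ℕ} {τ : Equiv.Perm (Fin k)} {π : Equiv.Perm (Fin n)}
    (h : Avoids τ π) : Avoids (pcompl τ) (pcompl π) := by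
  rintro ⟨f, hf, hiso⟩
  apply h
  refine ⟨f, hf, fun x y => ?_⟩
  have := hiso y x
  simp only [pcompl_apply, Fin.rev_lt_rev] at this
  exact this

open scoped Classical in
lemma avoiderCount_pcompl {k n : ℕ} (τ : Equiv.Perm (Fin k)) :
    avoiderCount n (pcompl τ) = avoiderCount n τ := by
  classical
  unfold avoiderCount
  apply Finset.card_bij' (fun π _ => pcompl π) (fun π _ => pcompl π)
  · intro π hπ
    simp only [Finset.mem_filter, Finset.mem_univ, true_and] at *
    have := avoids_pcompl hπ
    rwa [pcompl_pcompl] at this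
  · intro π hπ
    simp only [Finset.mem_filter, Finset.mem_univ, true_and] at *
    exact avoids_pcompl hπ
  · intro π _; exact pcompl_pcompl π
  · intro π _; exact pcompl_pcompl π

lemma skew_of_sum_pcompl {k : ℕ} {τ : Equiv.Perm (Fin k)}
    (h : SumDecomp (pcompl τ)) : SkewDecomp τ := by
  obtain ⟨j, hj0, hjk, hj⟩ := h
  refine ⟨j, hj0, hjk, fun x => ?_⟩
  have := hj x
  rw [pcompl_apply] at this
  have hrev : (Fin.rev (τ x)).val = k - 1 - (τ x).val := by
    rw [Fin.val_rev]; omega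
  have hlt := (τ x).isLt
  rw [hrev] at this
  omega

open scoped Classical in
lemma main_not_sum {k m n : ℕ} {τ : Equiv.Perm (Fin k)} (hτ : ¬ SumDecomp τ) :
    avoiderCount m τ * avoiderCount n τ ≤ avoiderCount (m + n) τ := by
  classical
  unfold avoiderCount
  rw [← Finset.card_product]
  apply Finset.card_le_card_of_injOn (fun p => psum p.1 p.2)
  · rintro ⟨σ, ρ⟩ hp
    simp only [Finset.mem_coe, Finset.mem_product, Finset.mem_filter, Finset.mem_univ, true_and] at *
    exact avoids_psum hτ hp.1 hp.2
  · rintro ⟨σ, ρ⟩ _ ⟨σ', ρ'⟩ _ h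
    obtain ⟨h1, h2⟩ := psum_injective2 h
    exact Prod.ext h1 h2

open scoped Classical in
lemma avoiderCount_eq_zero {k n : ℕ} (τ : Equiv.Perm (Fin k)) (hk : k ≤ 1) (hn : 1 ≤ n) :
    avoiderCount n τ = 0 := by
  classical
  unfold avoiderCount
  rw [Finset.card_eq_zero]
  ext π
  simp only [Finset.mem_filter, Finset.mem_univ, true_and, Finset.notMem_empty,
    iff_false]
  intro h
  apply h
  refine ⟨fun _ => ⟨0, by omega⟩, ?_, ?_⟩
  · intro x y hxy
    have h1 := x.isLt; have h2 := y.isLt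
    rw [Fin.lt_def] at hxy
    omega
  · intro x y
    have : x = y := by
      have h1 := x.isLt; have h2 := y.isLt
      ext; omega
    subst this
    simp

/-- Supermultiplicativity: s_{m+n}(τ,0) ≥ s_m(τ,0) · s_n(τ,0) for all m, n ≥ 1 and any
pattern τ. -/
theorem stmt10 (k : ℕ) (τ : Equiv.Perm (Fin k)) (m n : ℕ) (hm : 1 ≤ m) (hn : 1 ≤ n) :
    avoiderCount m τ * avoiderCount n τ ≤ avoiderCount (m + n) τ := by
  by_cases hk : k ≤ 1
  · rw [avoiderCount_eq_zero τ hk hm]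
    simp
  · by_cases hs : SumDecomp τ
    · have hns : ¬ SumDecomp (pcompl τ) := by
        intro h
        exact not_sum_and_skew τ ⟨hs, skew_of_sum_pcompl h⟩
      have := main_not_sum (m := m) (n := n) hns
      rwa [avoiderCount_pcompl, avoiderCount_pcompl, avoiderCount_pcompl] at this
    · exact main_not_sum hs
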